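/- Let X = ℝ, Y = ℝ², C = ℝ²₊, and f(x) = (x, −x eˣ). Then the set of efficient solutions of (X, f) equals [0, +∞), yet for every nonzero ξ ∈ C* = ℝ²₊ the function x ↦ ⟨ξ, f(x)⟩ is unbounded below on ℝ. -/
import Mathlib

/-- Strict monotonicity fact: for `0 ≤ xbar` and `x < xbar`, `x e^x < xbar e^xbar`. -/
lemma aux_mono {x xbar : ℝ} (h0 : 0 ≤ xbar) (hx : x < xbar) :
    x * Real.exp x < xbar * Real.exp xbar := by
  rcases lt_or_ge x 0 with h | h
  · calc x * Real.exp x < 0 := mul_neg_of_neg_of_pos h (Real.exp_pos x)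
      _ ≤ xbar * Real.exp xbar := mul_nonneg h0 (Real.exp_pos xbar).le
  · exact mul_lt_mul'' hx (Real.exp_lt_exp.2 hx) h (Real.exp_pos x).le

lemma aux_quad {t : ℝ} (ht : 0 ≤ t) : t ^ 2 / 4 ≤ Real.exp t := by
  have h1 : t / 2 + 1 ≤ Real.exp (t / 2) := by
    have := Real.add_one_le_exp (t / 2); linarith
  have h2 : Real.exp (t / 2) * Real.exp (t / 2) = Real.exp t := by
    rw [← Real.exp_add]; ring_nf
  nlinarith [Real.exp_pos (t / 2)]

lemma aux_small {t : ℝ} (ht : 1 ≤ t) : t * Real.exp (-t) ≤ 4 / t := by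
  have ht0 : 0 < t := by linarith
  have hq := aux_quad (le_of_lt ht0)
  have hp := Real.exp_pos t
  rw [Real.exp_neg, le_div_iff₀ ht0]
  have hinv : (Real.exp t)⁻¹ * Real.exp t = 1 := inv_mul_cancel₀ (ne_of_gt hp)
  have hinv0 : 0 ≤ (Real.exp t)⁻¹ := le_of_lt (inv_pos.2 hp)
  nlinarith [mul_le_mul_of_nonneg_left hq hinv0]

/-- For `f x = (x, -x eˣ)` and `C = ℝ²₊`, the set of efficient solutions is
`[0, ∞)`, yet every nonzero `ξ ∈ C*` gives a scalarization unbounded below. -/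
theorem example_efficient_but_unbounded :
    (let f : ℝ → ℝ × ℝ := fun x => (x, -x * Real.exp x)
     let C : Set (ℝ × ℝ) := {p | 0 ≤ p.1 ∧ 0 ≤ p.2}
     {xbar : ℝ | {y | ∃ x, y = f x - f xbar} ∩ (-C) = {0}} = Set.Ici (0 : ℝ)) ∧
    (∀ a b : ℝ, 0 ≤ a → 0 ≤ b → (a, b) ≠ ((0 : ℝ), (0 : ℝ)) →
      ¬ BddBelow (Set.range fun x : ℝ => a * x + b * (-x * Real.exp x))) := by
  constructor
  · -- Part 1: efficient set = [0, ∞)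
    dsimp only
    ext xbar
    simp only [Set.mem_setOf_eq, Set.mem_Ici]
    constructor
    · -- efficient → 0 ≤ xbar
      intro h
      by_contra hneg
      push_neg at hneg
      have hεpos : 0 < -xbar * Real.exp xbar :=
        mul_pos (by linarith) (Real.exp_pos _)
      set ε : ℝ := -xbar * Real.exp xbar with hε
      set t : ℝ := max (1 + |xbar|) (4 / ε) with ht
      have ht1 : 1 ≤ t :=
        le_trans (by linarith [abs_nonneg xbar]) (le_max_left _ _)
      have ht0 : 0 < t := lt_of_lt_of_le one_pos ht1
      have htx : -t < xbar := by
        have h1 : 1 + |xbar| ≤ t := le_max_left _ _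
        have h2 : -|xbar| ≤ xbar := neg_abs_le xbar
        linarith
      have h4t : 4 / t ≤ ε := by
        rw [div_le_iff₀ ht0]
        have h4 : 4 ≤ t * ε := (div_le_iff₀ hεpos).1 (le_max_right _ _)
        linarith
      have hsm : t * Real.exp (-t) ≤ ε := le_trans (aux_small ht1) h4t
      have hy : ((-t, -(-t) * Real.exp (-t)) - (xbar, -xbar * Real.exp xbar) : ℝ × ℝ)
          ∈ ({y : ℝ × ℝ | ∃ x, y = ((x, -x * Real.exp x) : ℝ × ℝ) -
                (xbar, -xbar * Real.exp xbar)} ∩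
              (-{p : ℝ × ℝ | 0 ≤ p.1 ∧ 0 ≤ p.2})) := by
        refine ⟨⟨-t, rfl⟩, ?_⟩
        simp only [Set.mem_neg, Set.mem_setOf_eq, Prod.mk_sub_mk, Prod.fst_neg,
          Prod.snd_neg, neg_neg]
        constructor
        · linarith
        · rw [← hε]; linarith
      have h0 := (Set.ext_iff.1 h _).1 hy
      rw [Set.mem_singleton_iff] at h0
      have h1 := congrArg Prod.fst h0
      simp only [Prod.mk_sub_mk, Prod.fst_zero] at h1
      linarith [h1]
    · -- 0 ≤ xbar → efficient
      intro hx
      ext y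
      simp only [Set.mem_inter_iff, Set.mem_setOf_eq, Set.mem_neg,
        Set.mem_singleton_iff]
      constructor
      · rintro ⟨⟨x, rfl⟩, hC⟩
        simp only [Prod.mk_sub_mk, Prod.fst_neg, Prod.snd_neg, neg_neg] at hC
        obtain ⟨hC1, hC2⟩ := hC
        have hxle : x ≤ xbar := by linarith
        have hxeq : x = xbar := by
          rcases lt_or_eq_of_le hxle with hlt | heq
          · exfalso
            have := aux_mono hx hlt
            nlinarith
          · exact heq
        subst hxeq
        simp
      · rintro rfl
        refine ⟨⟨xbar, by simp⟩, ?_⟩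
        simp only [Set.mem_neg, Set.mem_setOf_eq, neg_zero]
        exact ⟨le_refl 0, le_refl 0⟩
  · -- Part 2: scalarizations are unbounded below
    intro a b ha hb hab hB
    obtain ⟨m, hm⟩ := hB
    have hm' : ∀ x : ℝ, m ≤ a * x + b * (-x * Real.exp x) := fun x =>
      hm ⟨x, rfl⟩
    rcases hb.lt_or_eq with hbpos | hbz
    · -- b > 0
      set x : ℝ := max 1 ((a + 1 + |m|) / b) with hxdef
      have hx1 : 1 ≤ x := le_max_left _ _
      have hx2 : (a + 1 + |m|) / b ≤ x := le_max_right _ _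
      have hbx : a + 1 + |m| ≤ b * x := by
        rw [div_le_iff₀ hbpos] at hx2; linarith
      have hE : x + 1 ≤ Real.exp x := by
        have := Real.add_one_le_exp x; linarith
      have hbE : a + 1 + |m| ≤ b * Real.exp x := by nlinarith
      have hc : a - b * Real.exp x ≤ -1 - |m| := by linarith
      have habs : -|m| ≤ m := neg_abs_le m
      have hkey := hm' x
      have heq : a * x + b * (-x * Real.exp x) = x * (a - b * Real.exp x) := by
        ring
      rw [heq] at hkey
      have hcle : x * (a - b * Real.exp x) ≤ a - b * Real.exp x := by
        nlinarith [mul_nonneg (show (0:ℝ) ≤ x - 1 by linarith)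
          (show (0:ℝ) ≤ -(a - b * Real.exp x) by linarith [abs_nonneg m])]
      linarith
    · -- b = 0, so a > 0
      subst hbz
      have ha0 : a ≠ 0 := by
        intro h0; apply hab; rw [h0]
      have hapos : 0 < a := lt_of_le_of_ne ha (Ne.symm ha0)
      have harith : a * ((m - 1) / a) = m - 1 := by field_simp
      have := hm' ((m - 1) / a)
      rw [harith] at this
      linarith
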